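/- The minimum weight of a perfect matching on the odd-degree vertices X₁ of a minimum spanning tree is at most half the minimum Hamiltonian cycle weight of the whole graph, when edge weights satisfy the triangle inequality. -/

import Mathlib

open scoped Classical

/-- Cyclic weight of a closed tour given by the vertex list `l`:
the sum of `ρ` over consecutive pairs, including the pair closing the cycle. -/
def cycWeight {V : Type*} (ρ : V → V → ℝ) (l : List V) : ℝ :=
  ((l.zip (l.rotate 1)).map fun p => ρ p.1 p.2).sum

/-- The (cyclic) list of edges of a closed tour given by the vertex list `l`. -/
def cycEdges {V : Type*} (l : List V) : List (Sym2 V) :=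
  (l.zip (l.rotate 1)).map (fun p => Sym2.mk p.1 p.2)

/-- The list of endpoints of a list of matching pairs. -/
def matchVerts {V : Type*} (M : List (V × V)) : List V :=
  M.flatMap fun p => [p.1, p.2]

/-- `M` is a perfect matching on the vertex set `X`: a partition of `X` into pairs. -/
def IsPM {V : Type*} [DecidableEq V] (X : Finset V) (M : List (V × V)) : Prop :=
  (matchVerts M).Nodup ∧ (matchVerts M).toFinset = X

/-- The weight of a matching: the sum of weights of its pairs. -/
def mWeight {V : Type*} (ρ : V → V → ℝ) (M : List (V × V)) : ℝ :=
  (M.map fun p => ρ p.1 p.2).sum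

/-- Total edge weight of a graph. -/
noncomputable def gWeight {V : Type*} [Fintype V] (f : Sym2 V → ℝ) (T : SimpleGraph V) : ℝ :=
  ∑ e ∈ T.edgeSet.toFinset, f e

/-- The weight of a walk in the graph `G` with edge weights `f`
(edges are counted with multiplicity). -/
def walkWeight {V : Type*} (G : SimpleGraph V) (f : Sym2 V → ℝ) {u v : V} (p : G.Walk u v) : ℝ :=
  (p.edges.map f).sum

/-- Shortest-path distance between `i` and `j` (metric closure of `G`). -/
noncomputable def sdist {V : Type*} (G : SimpleGraph V) (f : Sym2 V → ℝ) (i j : V) : ℝ :=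
  sInf {x | ∃ p : G.Walk i j, x = walkWeight G f p}

def chainWeight {V : Type*} (ρ : V → V → ℝ) (l : List V) : ℝ :=
  ((l.zip l.tail).map fun p => ρ p.1 p.2).sum

@[simp] lemma chainWeight_nil {V : Type*} (ρ : V → V → ℝ) : chainWeight ρ [] = 0 := by
  simp [chainWeight]

@[simp] lemma chainWeight_single {V : Type*} (ρ : V → V → ℝ) (a : V) :
    chainWeight ρ [a] = 0 := by simp [chainWeight]

@[simp] lemma chainWeight_cons_cons {V : Type*} (ρ : V → V → ℝ) (a b : V) (t : List V) :
    chainWeight ρ (a :: b :: t) = ρ a b + chainWeight ρ (b :: t) := by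
  simp [chainWeight]

lemma cycWeight_eq_chain {V : Type*} (ρ : V → V → ℝ) (a : V) (t : List V) :
    cycWeight ρ (a :: t) = chainWeight ρ ((a :: t) ++ [a]) := by
  have h : ((a :: t) ++ [a]).zip (((a :: t) ++ [a]).tail) = (a :: t).zip (t ++ [a]) := by
    have ht : ((a :: t) ++ [a]).tail = (t ++ [a]) ++ [] := by simp
    rw [ht, List.zip_append (by simp)]
    simp
  simp only [cycWeight, chainWeight, h]
  congr 1
  rw [List.rotate_cons_succ, List.rotate_zero]

lemma chainWeight_append {V : Type*} (ρ : V → V → ℝ) (l₁ : List V) (a : V) (l₂ : List V) :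
    chainWeight ρ (l₁ ++ a :: l₂) = chainWeight ρ (l₁ ++ [a]) + chainWeight ρ (a :: l₂) := by
  induction l₁ with
  | nil => simp
  | cons b l₁ ih =>
    cases l₁ with
    | nil => simp [add_assoc]
    | cons c l₁' =>
      simp only [List.cons_append, chainWeight_cons_cons] at ih ⊢
      rw [ih]; ring

def toPairs {V : Type*} : List V → List (V × V)
  | a :: b :: t => (a, b) :: toPairs t
  | _ => []

@[simp] lemma toPairs_cons_cons {V : Type*} (a b : V) (t : List V) :
    toPairs (a :: b :: t) = (a, b) :: toPairs t := rfl

@[simp] lemma mWeight_cons {V : Type*} (ρ : V → V → ℝ) (p : V × V) (M : List (V × V)) :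
    mWeight ρ (p :: M) = ρ p.1 p.2 + mWeight ρ M := by simp [mWeight]

@[simp] lemma mWeight_nil {V : Type*} (ρ : V → V → ℝ) : mWeight ρ ([] : List (V × V)) = 0 := by
  simp [mWeight]

lemma matchVerts_toPairs {V : Type*} : ∀ (l : List V), Even l.length →
    matchVerts (toPairs l) = l
  | [], _ => rfl
  | [a], h => by simp at h
  | a :: b :: t, h => by
    have ht : Even t.length := by
      obtain ⟨k, hk⟩ := h
      simp only [List.length_cons] at hk
      exact ⟨k - 1, by omega⟩
    have h2 : matchVerts (toPairs (a :: b :: t)) = a :: b :: matchVerts (toPairs t) := by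
      simp [matchVerts, toPairs]
    rw [h2, matchVerts_toPairs t ht]

lemma cycWeight_rotate_one {V : Type*} (ρ : V → V → ℝ) (l : List V) :
    cycWeight ρ (l.rotate 1) = cycWeight ρ l := by
  cases l with
  | nil => simp
  | cons a t =>
    rw [List.rotate_cons_succ, List.rotate_zero]
    cases t with
    | nil => simp
    | cons b t' =>
      have h1 : (b :: t') ++ [a] = b :: (t' ++ [a]) := by simp
      rw [h1, cycWeight_eq_chain, cycWeight_eq_chain]
      have h2 : (b :: (t' ++ [a])) ++ [b] = (b :: t') ++ a :: [b] := by simp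
      rw [h2, chainWeight_append]
      have h3 : (a :: b :: t') ++ [a] = a :: ((b :: t') ++ [a]) := by simp
      rw [h3]
      have h4 : (b :: t') ++ [a] = b :: (t' ++ [a]) := by simp
      rw [h4, chainWeight_cons_cons]
      simp [add_comm]

lemma cycWeight_rotate {V : Type*} (ρ : V → V → ℝ) (l : List V) (n : ℕ) :
    cycWeight ρ (l.rotate n) = cycWeight ρ l := by
  induction n with
  | zero => simp
  | succ n ih =>
    have : l.rotate (n + 1) = (l.rotate n).rotate 1 := by
      rw [List.rotate_rotate]
    rw [this, cycWeight_rotate_one, ih]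

section Tri
variable {V : Type*} (ρ : V → V → ℝ) (hnn : ∀ i j, 0 ≤ ρ i j)
  (htri : ∀ i j k, ρ i j ≤ ρ i k + ρ k j)

include hnn in
lemma chainWeight_nonneg : ∀ l : List V, 0 ≤ chainWeight ρ l := by
  intro l
  apply List.sum_nonneg
  intro x hx
  simp only [List.mem_map] at hx
  obtain ⟨p, _, rfl⟩ := hx
  exact hnn _ _

include hnn htri in
lemma chain_step (a b : V) (t : List V) :
    chainWeight ρ (a :: t) ≤ ρ a b + chainWeight ρ (b :: t) := by
  cases t with
  | nil => simpa using hnn a b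
  | cons c t' =>
    rw [chainWeight_cons_cons, chainWeight_cons_cons, ← add_assoc]
    exact add_le_add_left (htri a c b) _

include hnn htri in
lemma chain_filter (p : V → Prop) [DecidablePred p] :
    ∀ (t : List V) (a : V), chainWeight ρ (a :: t.filter fun x => decide (p x)) ≤
      chainWeight ρ (a :: t) := by
  intro t
  induction t with
  | nil => simp
  | cons b t ih =>
    intro a
    by_cases hb : p b
    · rw [List.filter_cons_of_pos (by simpa using hb), chainWeight_cons_cons,
        chainWeight_cons_cons]
      exact add_le_add_right (ih b) _
    · rw [List.filter_cons_of_neg (by simpa using hb)]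
      calc chainWeight ρ (a :: t.filter fun x => decide (p x)) ≤ chainWeight ρ (a :: t) := ih a
        _ ≤ ρ a b + chainWeight ρ (b :: t) := chain_step ρ hnn htri a b t
        _ = chainWeight ρ (a :: b :: t) := (chainWeight_cons_cons ρ a b t).symm

lemma chain_split : ∀ (t : List V), Odd t.length → ∀ a z : V,
    chainWeight ρ (a :: t ++ [z]) =
      mWeight ρ (toPairs (a :: t)) + mWeight ρ (toPairs (t ++ [z]))
  | [], h => by simp at h
  | [b], _ => by
    intro a z
    simp [toPairs, chainWeight, mWeight]
  | b :: c :: t, h => by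
    intro a z
    have ht : Odd t.length := by
      obtain ⟨k, hk⟩ := h
      simp only [List.length_cons] at hk
      exact ⟨k - 1, by omega⟩
    have ih := chain_split t ht c z
    simp only [List.cons_append, chainWeight_cons_cons] at ih ⊢
    rw [ih]
    simp only [toPairs_cons_cons, mWeight_cons]
    ring

end Tri

/-- The minimum weight of a perfect matching on the odd-degree vertices `X₁`
of a spanning tree is at most half the minimum Hamiltonian cycle weight, when
the edge weights satisfy the triangle inequality. -/
theorem min_matching_on_odd_le_half {V : Type*} [Fintype V] [DecidableEq V]
    (ρ : V → V → ℝ) (hnn : ∀ i j, 0 ≤ ρ i j) (hsym : ∀ i j, ρ i j = ρ j i)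
    (htri : ∀ i j k, ρ i j ≤ ρ i k + ρ k j) (hV : 3 ≤ Fintype.card V)
    (T : SimpleGraph V) (hT : T.IsTree)
    (hX : 2 ≤ (Finset.univ.filter fun v => Odd (T.degree v)).card)
    (L₀ : List V) (hL₀ : L₀.Nodup) (hL₀span : L₀.toFinset = Finset.univ)
    (hL₀min : ∀ L : List V, L.Nodup → L.toFinset = Finset.univ →
      cycWeight ρ L₀ ≤ cycWeight ρ L) :
    sInf {x | ∃ M : List (V × V),
        IsPM (Finset.univ.filter fun v => Odd (T.degree v)) M ∧ x = mWeight ρ M}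
      ≤ cycWeight ρ L₀ / 2 := by
  set X₁ := Finset.univ.filter fun v => Odd (T.degree v) with hX₁def
  -- even cardinality of X₁
  have hEven : Even X₁.card := by
    have h := T.even_card_odd_degree_vertices
    convert h using 2
  -- a vertex of X₁
  obtain ⟨v, hv⟩ : ∃ v, v ∈ X₁ := Finset.card_pos.mp (by omega)
  have hvodd : Odd (T.degree v) := (Finset.mem_filter.mp hv).2
  -- rotate L₀ so that v is the head
  have hvL : v ∈ L₀ := by
    rw [← List.mem_toFinset, hL₀span]; exact Finset.mem_univ v
  obtain ⟨u, w, hL₀eq⟩ := List.append_of_mem hvL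
  set L : List V := v :: (w ++ u) with hLdef
  have hrot : L₀.rotate u.length = L := by
    rw [hL₀eq, List.rotate_eq_drop_append_take (by simp)]
    simp [hLdef]
  have hLperm : L.Perm L₀ := by rw [← hrot]; exact L₀.rotate_perm u.length
  have hLnodup : L.Nodup := hLperm.nodup_iff.mpr hL₀
  have hLcyc : cycWeight ρ L = cycWeight ρ L₀ := by
    rw [← hrot, cycWeight_rotate]
  -- shortcut the cycle to X₁
  set pb : V → Bool := fun x => decide (Odd (T.degree x)) with hpbdef
  set t : List V := (w ++ u).filter pb with htdef
  set l' : List V := v :: t with hl'def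
  have hpbv : pb v = true := by simp [hpbdef, hvodd]
  have hl'filter : l' = L.filter pb := by
    rw [hLdef, List.filter_cons_of_pos hpbv]
  have hl'nodup : l'.Nodup := by rw [hl'filter]; exact hLnodup.filter pb
  have hl'fin : l'.toFinset = X₁ := by
    ext x
    rw [hl'filter, List.mem_toFinset, List.mem_filter]
    rw [hX₁def, Finset.mem_filter]
    constructor
    · rintro ⟨-, hx⟩
      exact ⟨Finset.mem_univ x, by simpa [hpbdef] using hx⟩
    · rintro ⟨-, hx⟩
      refine ⟨?_, by simpa [hpbdef] using hx⟩
      have : x ∈ L.toFinset := by rw [List.toFinset_eq_of_perm _ _ hLperm, hL₀span]; exact Finset.mem_univ x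
      exact List.mem_toFinset.mp this
  have hl'len : l'.length = X₁.card := by
    rw [← hl'fin, List.toFinset_card_of_nodup hl'nodup]
  have htodd : Odd t.length := by
    have : l'.length = t.length + 1 := by simp [hl'def]
    have h2 : Even (t.length + 1) := by rw [← this, hl'len]; exact hEven
    exact Nat.not_even_iff_odd.mp (Nat.even_add_one.mp h2)
  -- cycle weight of the shortcut cycle
  have hshort : cycWeight ρ l' ≤ cycWeight ρ L := by
    rw [hl'def, hLdef, cycWeight_eq_chain, cycWeight_eq_chain]
    have e1 : (v :: t) ++ [v] = v :: (t ++ [v]) := by simp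
    have e2 : (v :: (w ++ u)) ++ [v] = v :: ((w ++ u) ++ [v]) := by simp
    rw [e1, e2]
    have e3 : t ++ [v] = ((w ++ u) ++ [v]).filter pb := by
      rw [List.filter_append, htdef]
      simp [hpbv]
    rw [e3]
    have := chain_filter ρ hnn htri (fun x => Odd (T.degree x)) ((w ++ u) ++ [v]) v
    simpa [hpbdef] using this
  -- the two matchings
  set M₁ : List (V × V) := toPairs l' with hM₁def
  set M₂ : List (V × V) := toPairs (t ++ [v]) with hM₂def
  have hl'even : Even l'.length := by rw [hl'len]; exact hEven
  have hteven : Even (t ++ [v]).length := by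
    simp only [List.length_append, List.length_singleton]
    simpa [hl'def, Nat.add_comm] using hl'even
  have hsum : mWeight ρ M₁ + mWeight ρ M₂ = cycWeight ρ l' := by
    rw [hl'def, cycWeight_eq_chain, hM₁def, hM₂def, hl'def]
    exact (chain_split ρ t htodd v v).symm
  have hperm2 : (t ++ [v]).Perm l' := by rw [hl'def]; exact List.perm_append_singleton v t
  have hPM₁ : IsPM X₁ M₁ := by
    rw [IsPM, hM₁def, matchVerts_toPairs l' hl'even]
    exact ⟨hl'nodup, hl'fin⟩
  have hPM₂ : IsPM X₁ M₂ := by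
    rw [IsPM, hM₂def, matchVerts_toPairs (t ++ [v]) hteven]
    exact ⟨hperm2.nodup_iff.mpr hl'nodup, by rw [List.toFinset_eq_of_perm _ _ hperm2, hl'fin]⟩
  -- conclude via sInf
  have hbdd : BddBelow {x | ∃ M : List (V × V), IsPM X₁ M ∧ x = mWeight ρ M} := by
    refine ⟨0, ?_⟩
    rintro x ⟨M, -, rfl⟩
    apply List.sum_nonneg
    intro y hy
    simp only [List.mem_map] at hy
    obtain ⟨q, -, rfl⟩ := hy
    exact hnn _ _
  have hkey : ∀ M : List (V × V), IsPM X₁ M → mWeight ρ M ≤ cycWeight ρ L₀ / 2 →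
      sInf {x | ∃ M : List (V × V), IsPM X₁ M ∧ x = mWeight ρ M} ≤ cycWeight ρ L₀ / 2 := by
    intro M hM hle
    exact le_trans (csInf_le hbdd ⟨M, hM, rfl⟩) hle
  have hhalf : cycWeight ρ l' ≤ cycWeight ρ L₀ := le_of_le_of_eq hshort hLcyc
  by_cases hc : mWeight ρ M₁ ≤ mWeight ρ M₂
  · exact hkey M₁ hPM₁ (by linarith)
  · exact hkey M₂ hPM₂ (by linarith)
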